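/- arXiv:2106.08289 — 5 statements merged into one kernel-verified Lean document; each statement's English description precedes it below -/
import Mathlib

section
/- Let X be a medial quandle and k a field. Then the subspace J_X of the quandle algebra k[X] spanned by the elements e_{x▷y} − e_{y▷x} for all x, y ∈ X is a two-sided ideal of k[X]; in particular, for every v ∈ J_X and every a ∈ k[X] one has a·v ∈ J_X. -/
/-- The quandle algebra multiplication on `X →₀ k`, as a bilinear map,
determined on basis vectors by `e_x · e_y = e_{op x y}`. -/
noncomputable def qmul {k X : Type*} [Field k] (op : X → X → X) :
    (X →₀ k) →ₗ[k] (X →₀ k) →ₗ[k] (X →₀ k) :=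
  Finsupp.lsum k fun x =>
    LinearMap.toSpanSingleton k ((X →₀ k) →ₗ[k] (X →₀ k))
      (Finsupp.lsum k fun y =>
        LinearMap.toSpanSingleton k (X →₀ k) (Finsupp.single (op x y) (1 : k)))

/-- A derivation of the quandle algebra: a linear map satisfying the Leibniz rule. -/
def IsDerivation {k X : Type*} [Field k] (op : X → X → X)
    (D : (X →₀ k) →ₗ[k] (X →₀ k)) : Prop :=
  ∀ a b : X →₀ k, D (qmul op a b) = qmul op (D a) b + qmul op a (D b)

lemma qmul_single_single {k X : Type*} [Field k] (op : X → X → X) (s t : X) :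
    qmul op (Finsupp.single s (1:k)) (Finsupp.single t 1) = Finsupp.single (op s t) 1 := by
  simp [qmul, Finsupp.lsum_single, LinearMap.toSpanSingleton_apply]

/-- For a medial quandle `(X, op)` and field `k`, the subspace `J_X` of `k[X]` spanned by the
elements `e_{x▷y} - e_{y▷x}` is a two-sided ideal: in particular `a · v ∈ J_X` (and also
`v · a ∈ J_X`) for all `v ∈ J_X` and `a ∈ k[X]`. -/
theorem two_sided_ideal_JX_medial {k X : Type*} [Field k] (op : X → X → X)
    (idem : ∀ x, op x x = x)
    (rbij : ∀ y, Function.Bijective fun x => op x y)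
    (distrib : ∀ x y z, op (op x y) z = op (op x z) (op y z))
    (medial : ∀ x y z w, op (op x y) (op z w) = op (op x z) (op y w)) :
    ∀ v ∈ Submodule.span k
      {w : X →₀ k | ∃ x y, w = Finsupp.single (op x y) 1 - Finsupp.single (op y x) 1},
      ∀ a : X →₀ k,
        qmul op v a ∈ Submodule.span k
          {w : X →₀ k | ∃ x y, w = Finsupp.single (op x y) 1 - Finsupp.single (op y x) 1} ∧
        qmul op a v ∈ Submodule.span k
          {w : X →₀ k | ∃ x y, w = Finsupp.single (op x y) 1 - Finsupp.single (op y x) 1} := by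
  set S : Set (X →₀ k) :=
    {w : X →₀ k | ∃ x y, w = Finsupp.single (op x y) 1 - Finsupp.single (op y x) 1} with hS
  set J := Submodule.span k S with hJ
  -- key: multiplication by a basis vector on either side preserves J
  have keyL : ∀ v ∈ J, ∀ t : X, qmul op v (Finsupp.single t (1:k)) ∈ J := by
    intro v hv t
    induction hv using Submodule.span_induction with
    | mem w hw =>
      obtain ⟨x, y, rfl⟩ := hw
      rw [map_sub, LinearMap.sub_apply, qmul_single_single, qmul_single_single,
        distrib x y t, distrib y x t]
      exact Submodule.subset_span ⟨op x t, op y t, rfl⟩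
    | zero => simp
    | add a b _ _ ha hb => rw [map_add]; exact J.add_mem ha hb
    | smul c a _ ha => rw [map_smul]; exact J.smul_mem c ha
  have keyR : ∀ v ∈ J, ∀ t : X, qmul op (Finsupp.single t (1:k)) v ∈ J := by
    intro v hv t
    induction hv using Submodule.span_induction with
    | mem w hw =>
      obtain ⟨x, y, rfl⟩ := hw
      rw [map_sub, qmul_single_single, qmul_single_single]
      have h1 : op t (op x y) = op (op t x) (op t y) := by
        conv_lhs => rw [← idem t, medial]
      have h2 : op t (op y x) = op (op t y) (op t x) := by
        conv_lhs => rw [← idem t, medial]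
      rw [h1, h2]
      exact Submodule.subset_span ⟨op t x, op t y, rfl⟩
    | zero => simp
    | add a b _ _ ha hb => rw [map_add]; exact J.add_mem ha hb
    | smul c a _ ha => rw [map_smul]; exact J.smul_mem c ha
  intro v hv a
  constructor
  · induction a using Finsupp.induction_linear with
    | zero => simp
    | add a b ha hb => rw [map_add]; exact J.add_mem ha hb
    | single x c =>
      have : Finsupp.single x c = c • Finsupp.single x (1:k) := by
        rw [Finsupp.smul_single, smul_eq_mul, mul_one]
      rw [this, map_smul]
      exact J.smul_mem c (keyL v hv x)
  · induction a using Finsupp.induction_linear with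
    | zero => simp
    | add a b ha hb => rw [map_add, LinearMap.add_apply]; exact J.add_mem ha hb
    | single x c =>
      have : Finsupp.single x c = c • Finsupp.single x (1:k) := by
        rw [Finsupp.smul_single, smul_eq_mul, mul_one]
      rw [this, map_smul, LinearMap.smul_apply]
      exact J.smul_mem c (keyR v hv x)
end

section
/- Let X be a finite trivial quandle (x▷y = x for all x,y) and k a field. A k-linear map D : k[X] → k[X] is a derivation of the quandle algebra k[X] if and only if the image of D is contained in the augmentation ideal I_X; equivalently, writing D(e_x) = Σ_u c_x^u e_u, if and only if Σ_u c_x^u = 0 for every x ∈ X. -/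
lemma qmul_trivial {k X : Type*} [Field k] [Fintype X] (a b : X →₀ k) :
    qmul (fun x _ : X => x) a b = (∑ u : X, b u) • a := by
  induction a using Finsupp.induction_linear with
  | zero => simp
  | add f g hf hg => simp [map_add, hf, hg, smul_add]
  | single x c =>
    induction b using Finsupp.induction_linear with
    | zero => simp
    | add f g hf hg =>
      rw [map_add, hf, hg, ← add_smul, ← Finset.sum_add_distrib]
      simp
    | single y d =>
      simp [qmul, Finsupp.lsum_single, LinearMap.toSpanSingleton_apply, Finsupp.smul_single,
        Finsupp.single_apply, Finset.sum_ite_eq', mul_comm]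

lemma deriv_iff_aux {k X : Type*} [Field k] [Fintype X]
    (D : (X →₀ k) →ₗ[k] (X →₀ k)) :
    IsDerivation (fun x _ : X => x) D ↔ ∀ a : X →₀ k, ∑ u : X, D a u = 0 := by
  constructor
  · intro h a
    by_cases hX : Nonempty X
    · obtain ⟨x₀⟩ := hX
      have := h (Finsupp.single x₀ 1) a
      rw [qmul_trivial, qmul_trivial, qmul_trivial, map_smul] at this
      have h2 : (∑ u : X, D a u) • Finsupp.single x₀ (1:k) = 0 := by
        have := congrArg (fun z => z - (∑ u : X, a u) • D (Finsupp.single x₀ 1)) this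
        simpa [add_comm] using this.symm
      have := congrArg (fun f : X →₀ k => f x₀) h2
      simpa using this
    · simp [Finset.univ_eq_empty_iff.mpr (not_nonempty_iff.mp hX)]
  · intro h a b
    rw [qmul_trivial, qmul_trivial, qmul_trivial, map_smul, h b]
    simp

/-- For a finite trivial quandle (`x ▷ y = x`), a linear map `D` on `k[X]` is a derivation iff
its image lies in the augmentation ideal, i.e. iff the coefficients of `D` satisfy
`Σ_u c_x^u = 0` for every `x`. -/
theorem derivation_trivial_quandle_iff {k X : Type*} [Field k] [Fintype X]
    (D : (X →₀ k) →ₗ[k] (X →₀ k)) :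
    (IsDerivation (fun x _ : X => x) D ↔ ∀ a : X →₀ k, ∑ u : X, D a u = 0) ∧
    (IsDerivation (fun x _ : X => x) D ↔ ∀ x : X, ∑ u : X, D (Finsupp.single x 1) u = 0) := by
  refine ⟨deriv_iff_aux D, (deriv_iff_aux D).trans ⟨fun h x => h _, fun h a => ?_⟩⟩
  induction a using Finsupp.induction_linear with
  | zero => simp
  | add f g hf hg => simp [map_add, Finset.sum_add_distrib, hf, hg]
  | single x c =>
    have : Finsupp.single x c = c • Finsupp.single x (1:k) := by simp
    rw [this, map_smul]
    simp [← Finset.mul_sum, h x]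
end

section
/- Let G be a group, k a field, and consider the quandle algebra k[G] of the conjugation quandle on G (with operation u▷v = v⁻¹uv). Let x be an element of the center Z(G) of G. Then the k-linear map D_x : k[G] → k[G] defined on basis elements by D_x(e_y) = e_y − e_{yx} (where yx denotes group multiplication) and extended linearly is a derivation of k[G]. -/
/-- helper -/
lemma qmul_single {k X : Type*} [Field k] (op : X → X → X) (a b : X) (c d : k) :
    qmul op (Finsupp.single a c) (Finsupp.single b d) = Finsupp.single (op a b) (c * d) := by
  simp [qmul, LinearMap.toSpanSingleton_apply, Finsupp.smul_single, mul_comm]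

/-- For a group `G` and a central element `x ∈ Z(G)`, the linear map
`D_x(e_y) = e_y - e_{yx}` is a derivation of the quandle algebra `k[G]` of the conjugation
quandle `u ▷ v = v⁻¹ u v`. -/
theorem central_translation_derivation {k G : Type*} [Field k] [Group G]
    (x : G) (hx : x ∈ Subgroup.center G) :
    IsDerivation (fun u v : G => v⁻¹ * u * v)
      ((LinearMap.id : (G →₀ k) →ₗ[k] (G →₀ k)) -
        Finsupp.lmapDomain k k (fun y : G => y * x)) := by
  intro a b
  set D := ((LinearMap.id : (G →₀ k) →ₗ[k] (G →₀ k)) -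
        Finsupp.lmapDomain k k (fun y : G => y * x)) with hD
  have hDs : ∀ (y : G) (c : k), D (Finsupp.single y c)
      = Finsupp.single y c - Finsupp.single (y * x) c := by
    intro y c
    simp [hD, Finsupp.mapDomain_single]
  induction a using Finsupp.induction_linear with
  | zero => simp
  | add f g hf hg =>
      simp only [map_add, LinearMap.add_apply] at *
      rw [hf, hg]; abel
  | single a c =>
      induction b using Finsupp.induction_linear with
      | zero => simp
      | add f g hf hg =>
          simp only [map_add] at *
          rw [hf, hg]; abel
      | single b d =>
          have hcomm := (Subgroup.mem_center_iff.mp hx)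
          have h1 : b⁻¹ * (a * x) * b = b⁻¹ * a * b * x := by
            calc b⁻¹ * (a * x) * b = b⁻¹ * a * (x * b) := by group
              _ = b⁻¹ * a * (b * x) := by rw [← hcomm]
              _ = b⁻¹ * a * b * x := by group
          have h2 : (b * x)⁻¹ * a * (b * x) = b⁻¹ * a * b := by
            calc (b * x)⁻¹ * a * (b * x) = x⁻¹ * (b⁻¹ * a * b * x) := by group
              _ = x⁻¹ * (x * (b⁻¹ * a * b)) := by rw [hcomm]
              _ = b⁻¹ * a * b := by group
          rw [qmul_single, hDs, hDs, hDs, map_sub, map_sub, LinearMap.sub_apply,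
            qmul_single, qmul_single, qmul_single]
          simp only [h1, h2]
          abel
end

section
/- Let k be a field of characteristic zero, let K ≥ 2 be an even integer, set n = 4K, and let X = Z_n be the dihedral quandle (x▷y = 2y − x in Z_n). Then every derivation D of the quandle algebra k[X], with matrix coefficients defined by D(e_t) = Σ_x c_t^x e_x, satisfies the symmetry c_t^x = c_{t+K}^{x+K} for all t, x ∈ Z_n. -/
section AuxHelpers

variable {k : Type*} [Field k] {α : Type*} [DecidableEq α]

lemma my_sum_ite_eq (x0 : α) (a : α →₀ k) :
    (a.sum fun x r => if x = x0 then r else 0) = a x0 := by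
  rw [Finsupp.sum, Finset.sum_ite_eq' a.support x0 a]
  split
  · rfl
  · exact (Finsupp.notMem_support_iff.mp ‹_›).symm

lemma my_sum_ite_or {x0 x1 : α} (h : x0 ≠ x1) (a : α →₀ k) :
    (a.sum fun x r => if x = x0 ∨ x = x1 then r else 0) = a x0 + a x1 := by
  have key : ∀ x (r : k), (if x = x0 ∨ x = x1 then r else 0)
      = (if x = x0 then r else 0) + (if x = x1 then r else 0) := by
    intro x r
    by_cases h0 : x = x0 <;> by_cases h1 : x = x1 <;> simp_all
  rw [Finsupp.sum_congr (g2 := fun x r => (if x = x0 then r else 0) + (if x = x1 then r else 0))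
    (fun x _ => key x (a x)), Finsupp.sum_add]
  rw [my_sum_ite_eq x0 a, my_sum_ite_eq x1 a]

lemma my_qmul_ss (op : α → α → α) (a b : α) :
    qmul op (Finsupp.single a (1:k)) (Finsupp.single b 1) = Finsupp.single (op a b) 1 := by
  simp [qmul, Finsupp.lsum_single, LinearMap.toSpanSingleton_apply]

lemma my_qmul_right (op : α → α → α) (a : α →₀ k) (b u : α) :
    qmul op a (Finsupp.single b 1) u = a.sum fun x r => if op x b = u then r else 0 := by
  simp [qmul, Finsupp.lsum_apply, LinearMap.toSpanSingleton_apply, Finsupp.lsum_single,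
    Finsupp.sum_apply, Finsupp.single_apply]

lemma my_qmul_left (op : α → α → α) (b : α →₀ k) (x u : α) :
    qmul op (Finsupp.single x 1) b u = b.sum fun z r => if op x z = u then r else 0 := by
  simp [qmul, Finsupp.lsum_single, Finsupp.lsum_apply, LinearMap.toSpanSingleton_apply,
    Finsupp.sum_apply, Finsupp.single_apply]

end AuxHelpers

set_option maxHeartbeats 1000000 in
/-- For the dihedral quandle `Z_n` with `n = 4K`, `K ≥ 2` even, over a field of characteristic
zero, the matrix coefficients of any derivation satisfy `c_t^x = c_{t+K}^{x+K}`. -/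
theorem dihedral_4k_even_derivation_shift {k : Type*} [Field k] [CharZero k]
    (K : ℕ) (hK : 2 ≤ K) (hKeven : Even K)
    (D : (ZMod (4 * K) →₀ k) →ₗ[k] (ZMod (4 * K) →₀ k))
    (hD : IsDerivation (fun x y : ZMod (4 * K) => 2 * y - x) D)
    (c : ZMod (4 * K) → ZMod (4 * K) → k)
    (hc : ∀ t u, D (Finsupp.single t 1) u = c t u) :
    ∀ t x : ZMod (4 * K),
      c t x = c (t + (K : ZMod (4 * K))) (x + (K : ZMod (4 * K))) := by
  obtain ⟨m, rfl⟩ := hKeven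
  haveI : NeZero (4 * (m + m)) := ⟨by omega⟩
  have h2k : (2:k) ≠ 0 := two_ne_zero
  set μ : ZMod (4 * (m + m)) := (m : ZMod (4 * (m + m))) with hμ
  -- basic arithmetic facts in ZMod (4*(m+m))
  have h8 : 8 * μ = 0 := by
    rw [hμ]
    have h0 := ZMod.natCast_self (4 * (m + m))
    push_cast at h0
    linear_combination h0
  have hQcast : ((2 * (m + m) : ℕ) : ZMod (4 * (m + m))) = 4 * μ := by
    rw [hμ]; push_cast; ring
  have hQne : (4 : ZMod (4 * (m + m))) * μ ≠ 0 := by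
    intro hcon
    rw [← hQcast] at hcon
    have hdvd := (ZMod.natCast_eq_zero_iff _ _).mp hcon
    have := Nat.le_of_dvd (by omega) hdvd
    omega
  clear_value μ
  have hker : ∀ d : ZMod (4 * (m + m)), 2 * d = 0 ↔ d = 0 ∨ d = 4 * μ := by
    intro d
    constructor
    · intro h
      have hd : ((d.val : ℕ) : ZMod (4 * (m + m))) = d := by
        simp [ZMod.natCast_val, ZMod.cast_id]
      have h2 : ((2 * d.val : ℕ) : ZMod (4 * (m + m))) = 0 := by push_cast; rw [hd]; exact h
      have hdvd : (4 * (m + m)) ∣ 2 * d.val := (ZMod.natCast_eq_zero_iff _ _).mp h2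
      have hlt : d.val < 4 * (m + m) := ZMod.val_lt d
      obtain ⟨q, hq⟩ := hdvd
      have hq2 : q < 2 := by nlinarith
      interval_cases q
      · left
        have hv : d.val = 0 := by omega
        rw [← hd, hv]; simp
      · right
        have hv : d.val = 2 * (m + m) := by omega
        rw [← hd, hv, hQcast]
    · rintro (rfl | rfl)
      · ring
      · linear_combination h8
  have hodd : ∀ w z : ZMod (4 * (m + m)), 2 * w ≠ 2 * z + 1 := by
    intro w z h
    have h2 : 2 * (w - z) = 1 := by linear_combination h
    set e := w - z with he
    have hd : ((e.val : ℕ) : ZMod (4 * (m + m))) = e := by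
      simp [ZMod.natCast_val, ZMod.cast_id]
    have h3 : ((2 * e.val : ℕ) : ZMod (4 * (m + m))) = ((1:ℕ) : ZMod (4 * (m + m))) := by
      push_cast; rw [hd]; exact_mod_cast h2
    have h4 : 2 * e.val ≡ 1 [MOD 4 * (m + m)] := (ZMod.natCast_eq_natCast_iff _ _ _).mp h3
    have h5 : 2 * e.val ≡ 1 [MOD 2] := h4.of_dvd ⟨2 * (m + m), by ring⟩
    unfold Nat.ModEq at h5
    omega
  have hpar : ∀ δ : ZMod (4 * (m + m)), ∃ d : ZMod (4 * (m + m)), δ = 2 * d ∨ δ = 2 * d + 1 := by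
    intro δ
    have hd : ((δ.val : ℕ) : ZMod (4 * (m + m))) = δ := by
      simp [ZMod.natCast_val, ZMod.cast_id]
    rcases Nat.even_or_odd δ.val with ⟨w, hw⟩ | ⟨w, hw⟩
    · exact ⟨(w : ZMod (4 * (m + m))), Or.inl (by rw [← hd, hw]; push_cast; ring)⟩
    · exact ⟨(w : ZMod (4 * (m + m))), Or.inr (by rw [← hd, hw]; push_cast; ring)⟩
  -- The fundamental coefficient relations from the Leibniz rule
  have E1g : ∀ x y z t u v : ZMod (4 * (m + m)), t = 2*y - x → u = 2*z - x →
      v = 2*y - 2*z + x → c t u = c x v + c y z + c y (z + 4*μ) := by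
    intro x y z t u v ht hu hv
    subst ht; subst hu; subst hv
    have h := hD (Finsupp.single x (1:k)) (Finsupp.single y (1:k))
    simp only [my_qmul_ss] at h
    have h2 := DFunLike.congr_fun h (2*z - x)
    simp only [Finsupp.add_apply, my_qmul_right, my_qmul_left] at h2
    have cond1 : ∀ w : ZMod (4 * (m + m)),
        (2*y - w = 2*z - x) = (w = 2*y - (2*z - x)) := by
      intro w
      apply propext
      constructor <;> intro hh <;> linear_combination -hh
    have cond2 : ∀ w : ZMod (4 * (m + m)),
        (2*w - x = 2*z - x) = (w = z ∨ w = z + 4*μ) := by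
      intro w
      apply propext
      constructor
      · intro hh
        rcases (hker (w - z)).mp (by linear_combination hh) with h0 | h0
        · left; linear_combination h0
        · right; linear_combination h0
      · rintro (rfl | rfl)
        · ring
        · linear_combination h8
    have hne : z ≠ z + 4*μ := by
      intro hcon; exact hQne (by linear_combination -hcon)
    simp only [cond1, cond2] at h2
    rw [my_sum_ite_eq, my_sum_ite_or hne] at h2
    simp only [hc] at h2
    rw [show 2*y - (2*z - x) = 2*y - 2*z + x from by ring] at h2
    linear_combination h2
  have E2g : ∀ x y z t u v : ZMod (4 * (m + m)), t = 2*y - x → u = 2*z + 1 - x →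
      v = 2*y - 2*z - 1 + x → c t u = c x v := by
    intro x y z t u v ht hu hv
    subst ht; subst hu; subst hv
    have h := hD (Finsupp.single x (1:k)) (Finsupp.single y (1:k))
    simp only [my_qmul_ss] at h
    have h2 := DFunLike.congr_fun h (2*z + 1 - x)
    simp only [Finsupp.add_apply, my_qmul_right, my_qmul_left] at h2
    have cond1 : ∀ w : ZMod (4 * (m + m)),
        (2*y - w = 2*z + 1 - x) = (w = 2*y - (2*z + 1 - x)) := by
      intro w
      apply propext
      constructor <;> intro hh <;> linear_combination -hh
    have cond2 : ∀ w : ZMod (4 * (m + m)),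
        (2*w - x = 2*z + 1 - x) = False := by
      intro w
      apply propext
      constructor
      · intro hh
        exact hodd w z (by linear_combination hh)
      · exact False.elim
    simp only [cond1, cond2, if_false, Finsupp.sum_fun_zero, add_zero] at h2
    rw [my_sum_ite_eq] at h2
    simp only [hc] at h2
    rw [show 2*y - (2*z + 1 - x) = 2*y - 2*z - 1 + x from by ring] at h2
    linear_combination h2
  -- Level 1: T
  set T : ZMod (4 * (m + m)) → ZMod (4 * (m + m)) → k :=
    fun y z => c y z + c y (z + 4*μ) with hT
  clear_value T
  have hTs : ∀ y z z' : ZMod (4 * (m + m)), z' = z + 4*μ → T y z' = T y z := by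
    intro y z z' hz; subst hz
    simp only [hT]
    rw [show z + 4*μ + 4*μ = z from by linear_combination h8]
    ring
  have TE1 : ∀ x y z t u v : ZMod (4 * (m + m)), t = 2*y - x → u = 2*z - x →
      v = 2*y - 2*z + x → T t u = T x v + T y z + T y (z + 2*μ) := by
    intro x y z t u v ht hu hv
    subst ht; subst hu; subst hv
    have A1 := E1g x y z _ _ _ rfl rfl rfl
    have A2 := E1g x y (z + 2*μ) (2*y - x) (2*z - x + 4*μ) (2*y - 2*z + x - 4*μ)
      rfl (by ring) (by ring)
    have A4 : c x (2*y - 2*z + x - 4*μ) = c x (2*y - 2*z + x + 4*μ) := by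
      rw [show 2*y - 2*z + x - 4*μ = 2*y - 2*z + x + 4*μ from by linear_combination -h8]
    simp only [hT]
    linear_combination A1 + A2 + A4
  have TE2 : ∀ x y z t u v : ZMod (4 * (m + m)), t = 2*y - x → u = 2*z + 1 - x →
      v = 2*y - 2*z - 1 + x → T t u = T x v := by
    intro x y z t u v ht hu hv
    subst ht; subst hu; subst hv
    have A1 := E2g x y z _ _ _ rfl rfl rfl
    have A2 := E2g x y (z + 2*μ) (2*y - x) (2*z + 1 - x + 4*μ) (2*y - 2*z - 1 + x - 4*μ)
      rfl (by ring) (by ring)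
    have A4 : c x (2*y - 2*z - 1 + x - 4*μ) = c x (2*y - 2*z - 1 + x + 4*μ) := by
      rw [show 2*y - 2*z - 1 + x - 4*μ = 2*y - 2*z - 1 + x + 4*μ from by linear_combination -h8]
    simp only [hT]
    linear_combination A1 + A2 + A4
  have TC0 : ∀ y z : ZMod (4 * (m + m)), T (y + 4*μ) z = T y z := by
    intro y z
    have A1 := E1g 0 y z (2*y) (2*z) (2*y - 2*z) (by ring) (by ring) (by ring)
    have A2 := E1g 0 (y + 4*μ) z (2*y) (2*z) (2*y - 2*z)
      (by linear_combination -h8) (by ring) (by linear_combination -h8)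
    simp only [hT]
    linear_combination A1 - A2
  have TP2 : ∀ y z : ZMod (4 * (m + m)), T y (2*y - z) = -T y z := by
    intro y z
    have A1 := E1g 0 y z (2*y) (2*z) (2*y - 2*z) (by ring) (by ring) (by ring)
    have A2 := E1g (2*y) y (2*y - z) 0 (2*y - 2*z) (2*z) (by ring) (by ring) (by ring)
    simp only [hT]
    linear_combination -A1 - A2
  have hTodd0 : ∀ y d : ZMod (4 * (m + m)), T y (y + (2*d + 1)) = 0 := by
    intro y d
    have A1 := TE2 y y (y + d) y (y + (2*d + 1)) (y - (2*d + 1)) (by ring) (by ring) (by ring)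
    have B := TP2 y (y + (2*d + 1))
    rw [show 2*y - (y + (2*d + 1)) = y - (2*d + 1) from by ring] at B
    have h2 : (2:k) * T y (y + (2*d + 1)) = 0 := by linear_combination A1 + B
    rcases mul_eq_zero.mp h2 with h | h
    · exact absurd h h2k
    · exact h
  -- Level 2: T2
  set T2 : ZMod (4 * (m + m)) → ZMod (4 * (m + m)) → k :=
    fun y z => T y z + T y (z + 2*μ) with hT2
  clear_value T2
  have hT2s : ∀ y z z' : ZMod (4 * (m + m)), z' = z + 2*μ → T2 y z' = T2 y z := by
    intro y z z' hz; subst hz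
    simp only [hT2]
    have hA := hTs y z (z + 2*μ + 2*μ) (by ring)
    linear_combination hA
  have hT2C0 : ∀ y z : ZMod (4 * (m + m)), T2 (y + 2*μ) z = T2 y z := by
    intro y z
    have A1 := TE1 0 y z (2*y) (2*z) (2*y - 2*z) (by ring) (by ring) (by ring)
    have A2 := TE1 0 (y + 2*μ) z (2*y + 4*μ) (2*z) (2*y - 2*z + 4*μ) (by ring) (by ring) (by ring)
    have A3 := TC0 (2*y) (2*z)
    have A4 := hTs 0 (2*y - 2*z) (2*y - 2*z + 4*μ) (by ring)
    simp only [hT2]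
    linear_combination A1 - A2 + A3 - A4
  have T2E1 : ∀ x y z t u v : ZMod (4 * (m + m)), t = 2*y - x → u = 2*z - x →
      v = 2*y - 2*z + x → T2 t u = T2 x v + T2 y z + T2 y (z + μ) := by
    intro x y z t u v ht hu hv
    subst ht; subst hu; subst hv
    have A1 := TE1 x y z _ _ _ rfl rfl rfl
    have A2 := TE1 x y (z + μ) (2*y - x) (2*z - x + 2*μ) (2*y - 2*z + x - 2*μ)
      rfl (by ring) (by ring)
    have A4 := hTs x (2*y - 2*z + x - 2*μ) (2*y - 2*z + x + 2*μ) (by ring)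
    simp only [hT2]
    linear_combination A1 + A2 - A4
  have T2E2 : ∀ x y z t u v : ZMod (4 * (m + m)), t = 2*y - x → u = 2*z + 1 - x →
      v = 2*y - 2*z - 1 + x → T2 t u = T2 x v := by
    intro x y z t u v ht hu hv
    subst ht; subst hu; subst hv
    have A1 := TE2 x y z _ _ _ rfl rfl rfl
    have A2 := TE2 x y (z + μ) (2*y - x) (2*z + 1 - x + 2*μ) (2*y - 2*z - 1 + x - 2*μ)
      rfl (by ring) (by ring)
    have A4 := hTs x (2*y - 2*z - 1 + x - 2*μ) (2*y - 2*z - 1 + x + 2*μ) (by ring)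
    simp only [hT2]
    linear_combination A1 + A2 - A4
  have hT2P2 : ∀ y z : ZMod (4 * (m + m)), T2 y (2*y - z) = -T2 y z := by
    intro y z
    have A1 := TE1 0 y z (2*y) (2*z) (2*y - 2*z) (by ring) (by ring) (by ring)
    have A2 := TE1 (2*y) y (2*y - z) 0 (2*y - 2*z) (2*z) (by ring) (by ring) (by ring)
    simp only [hT2]
    linear_combination -A1 - A2
  have hT2odd0 : ∀ y d : ZMod (4 * (m + m)), T2 y (y + (2*d + 1)) = 0 := by
    intro y d
    have A1 := T2E2 y y (y + d) y (y + (2*d + 1)) (y - (2*d + 1)) (by ring) (by ring) (by ring)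
    have B := hT2P2 y (y + (2*d + 1))
    rw [show 2*y - (y + (2*d + 1)) = y - (2*d + 1) from by ring] at B
    have h2 : (2:k) * T2 y (y + (2*d + 1)) = 0 := by linear_combination A1 + B
    rcases mul_eq_zero.mp h2 with h | h
    · exact absurd h h2k
    · exact h
  -- Level 3: T3
  set T3 : ZMod (4 * (m + m)) → ZMod (4 * (m + m)) → k :=
    fun y z => T2 y z + T2 y (z + μ) with hT3
  clear_value T3
  have hT3s : ∀ y z z' : ZMod (4 * (m + m)), z' = z + μ → T3 y z' = T3 y z := by
    intro y z z' hz; subst hz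
    simp only [hT3]
    have hA := hT2s y z (z + μ + μ) (by ring)
    linear_combination hA
  have hT3C0 : ∀ y z : ZMod (4 * (m + m)), T3 (y + μ) z = T3 y z := by
    intro y z
    have A1 := T2E1 0 y z (2*y) (2*z) (2*y - 2*z) (by ring) (by ring) (by ring)
    have A2 := T2E1 0 (y + μ) z (2*y + 2*μ) (2*z) (2*y - 2*z + 2*μ) (by ring) (by ring) (by ring)
    have A3 := hT2C0 (2*y) (2*z)
    have A4 := hT2s 0 (2*y - 2*z) (2*y - 2*z + 2*μ) (by ring)
    simp only [hT3]
    linear_combination A1 - A2 + A3 - A4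
  -- doubling formulas
  have evenT : ∀ x w : ZMod (4 * (m + m)), (2:k) * T x (x + 2*w) = T2 x (x + w) := by
    intro x w
    have A1 := TE1 x x (x + w) x (x + 2*w) (x - 2*w) (by ring) (by ring) (by ring)
    have B := TP2 x (x + 2*w)
    rw [show 2*x - (x + 2*w) = x - 2*w from by ring] at B
    simp only [hT2]
    linear_combination A1 + B
  have evenT2 : ∀ x w : ZMod (4 * (m + m)), (2:k) * T2 x (x + 2*w) = T3 x (x + w) := by
    intro x w
    have A1 := T2E1 x x (x + w) x (x + 2*w) (x - 2*w) (by ring) (by ring) (by ring)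
    have B := hT2P2 x (x + 2*w)
    rw [show 2*x - (x + 2*w) = x - 2*w from by ring] at B
    simp only [hT3]
    linear_combination A1 + B
  -- the shift results
  have star2 : ∀ t w : ZMod (4 * (m + m)), T2 (t + μ) (t + μ + w) = T2 t (t + w) := by
    intro t w
    obtain ⟨d, hd | hd⟩ := hpar w
    · subst hd
      have h1 := evenT2 (t + μ) d
      have h2 := evenT2 t d
      have h3 := hT3C0 t (t + μ + d)
      have h4 := hT3s t (t + d) (t + μ + d) (by ring)
      have hcomb : (2:k) * T2 (t + μ) (t + μ + 2*d) = 2 * T2 t (t + 2*d) := by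
        linear_combination h1 - h2 + h3 + h4
      exact mul_left_cancel₀ h2k hcomb
    · subst hd
      have h1 := hT2odd0 (t + μ) d
      have h2 := hT2odd0 t d
      linear_combination h1 - h2
  have star1 : ∀ t w : ZMod (4 * (m + m)), T (t + μ) (t + μ + w) = T t (t + w) := by
    intro t w
    obtain ⟨d, hd | hd⟩ := hpar w
    · subst hd
      have h1 := evenT (t + μ) d
      have h2 := evenT t d
      have h3 := star2 t d
      have hcomb : (2:k) * T (t + μ) (t + μ + 2*d) = 2 * T t (t + 2*d) := by
        linear_combination h1 - h2 + h3
      exact mul_left_cancel₀ h2k hcomb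
    · subst hd
      have h1 := hTodd0 (t + μ) d
      have h2 := hTodd0 t d
      linear_combination h1 - h2
  -- translation formulas at level 0
  have M0 : ∀ x a e t' u' y' z' : ZMod (4 * (m + m)), t' = x + 2*a → u' = x + 2*a + 2*e →
      y' = x + a → z' = x + a + e → c t' u' = c x (x - 2*e) + T y' z' := by
    intro x a e t' u' y' z' ht hu hy hz
    subst ht; subst hu; subst hy; subst hz
    have A1 := E1g x (x + a) (x + a + e) (x + 2*a) (x + 2*a + 2*e) (x - 2*e)
      (by ring) (by ring) (by ring)
    simp only [hT]
    linear_combination A1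
  have Oodd : ∀ x a d t' u' : ZMod (4 * (m + m)), t' = x + 2*a → u' = x + 2*a + (2*d + 1) →
      c t' u' = c x (x - (2*d + 1)) := by
    intro x a d t' u' ht hu
    subst ht; subst hu
    exact E2g x (x + a) (x + a + d) _ _ _ (by ring) (by ring) (by ring)
  -- conclusion
  have hshift : ((m + m : ℕ) : ZMod (4 * (m + m))) = 2*μ := by rw [hμ]; push_cast; ring
  intro t x
  rw [hshift]
  obtain ⟨d, hd | hd⟩ := hpar (x - t)
  · have h1 := M0 t 0 d t x t (t + d) (by ring) (by linear_combination hd) (by ring) (by ring)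
    have h2 := M0 t μ d (t + 2*μ) (x + 2*μ) (t + μ) (t + μ + d)
      (by ring) (by linear_combination hd) (by ring) (by ring)
    have h3 := star1 t d
    linear_combination h1 - h2 - h3
  · have h1 := Oodd t 0 d t x (by ring) (by linear_combination hd)
    have h2 := Oodd t μ d (t + 2*μ) (x + 2*μ) (by ring) (by linear_combination hd)
    linear_combination h1 - h2
end

section
/- Let R be a commutative ring, α ∈ R an invertible element, β = 1 − α, and M an R-module; equip M with the Alexander quandle operation x▷y = αx + βy. Let k be a field and A = k[M] the quandle algebra. Then for all x, y ∈ M the identity of linear endomorphisms of A holds: [L_{e_x}, L_{e_y}] = L_{e_{x+βy}} ∘ L_{e_0} − L_{e_{y+βx}} ∘ L_{e_0}, where [f,g] = f∘g − g∘f and 0 denotes the zero element of M. -/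
/-- For the Alexander quandle `x ▷ y = α•x + (1-α)•y` on an `R`-module `M` (with `α` a unit),
the left multiplication operators on the quandle algebra satisfy
`[L_{e_x}, L_{e_y}] = L_{e_{x+βy}} ∘ L_{e_0} − L_{e_{y+βx}} ∘ L_{e_0}`, where `β = 1 - α`. -/
theorem alexander_left_mul_bracket {k R M : Type*} [Field k]
    [CommRing R] [AddCommGroup M] [Module R M] (α : R) (hα : IsUnit α)
    (op : M → M → M) (hop : ∀ x y, op x y = α • x + (1 - α) • y) (x y : M) :
    (qmul op (Finsupp.single x (1 : k))).comp (qmul op (Finsupp.single y (1 : k))) -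
        (qmul op (Finsupp.single y (1 : k))).comp (qmul op (Finsupp.single x (1 : k))) =
      (qmul op (Finsupp.single (x + (1 - α) • y) (1 : k))).comp
          (qmul op (Finsupp.single (0 : M) (1 : k))) -
        (qmul op (Finsupp.single (y + (1 - α) • x) (1 : k))).comp
          (qmul op (Finsupp.single (0 : M) (1 : k))) := by
  have hs : ∀ a b : M, qmul (k := k) op (Finsupp.single a 1) (Finsupp.single b 1) =
      Finsupp.single (op a b) 1 := by
    intro a b
    simp [qmul]
  ext z
  simp only [LinearMap.sub_apply, LinearMap.comp_apply, Finsupp.lsingle_apply, hs]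
  have h1 : op x (op y z) = op (x + (1 - α) • y) (op 0 z) := by
    simp only [hop]; module
  have h2 : op y (op x z) = op (y + (1 - α) • x) (op 0 z) := by
    simp only [hop]; module
  rw [h1, h2]
end
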